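/- Let K₁ and K₂ be isotropic subspaces of (E, B), with induced nondegenerate symmetric forms B̄₁ on K₁^⊥/K₁ and B̄₂ on K₂^⊥/K₂, and let R = {(q₁(e), q₂(e)) : e ∈ K₁^⊥ ∩ K₂^⊥} ⊆ (K₁^⊥/K₁) × (K₂^⊥/K₂). If there exist generalised metrics τ̄₁ on (K₁^⊥/K₁, B̄₁) and τ̄₂ on (K₂^⊥/K₂, B̄₂) such that (τ̄₁ × τ̄₂)(R) = R, then K₁ ∩ K₂^⊥ ⊆ K₂ and K₂ ∩ K₁^⊥ ⊆ K₁. -/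

import Mathlib

/-- The orthogonal complement `K^⊥` of a subspace `K` with respect to `B`. -/
noncomputable def orthB {E : Type*} [AddCommGroup E] [Module ℝ E]
    (B : LinearMap.BilinForm ℝ E) (K : Submodule ℝ E) : Submodule ℝ E :=
  LinearMap.BilinForm.orthogonal B K
/-- An isotropic `K`, regarded as a submodule of `K^⊥`. -/
noncomputable def Ksub {E : Type*} [AddCommGroup E] [Module ℝ E]
    (B : LinearMap.BilinForm ℝ E) (K : Submodule ℝ E) : Submodule ℝ ↥(orthB B K) :=
  Submodule.comap (orthB B K).subtype K

/-- The reduced space `K^⊥/K`. -/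
abbrev Red {E : Type*} [AddCommGroup E] [Module ℝ E]
    (B : LinearMap.BilinForm ℝ E) (K : Submodule ℝ E) :=
  ↥(orthB B K) ⧸ Ksub B K

/-- The quotient map `q : K^⊥ → K^⊥/K`. -/
noncomputable def qmap {E : Type*} [AddCommGroup E] [Module ℝ E]
    (B : LinearMap.BilinForm ℝ E) (K : Submodule ℝ E) :
    ↥(orthB B K) →ₗ[ℝ] Red B K :=
  (Ksub B K).mkQ
/-- The map `L : K₁^⊥ ∩ K₂^⊥ → (K₁^⊥/K₁) × (K₂^⊥/K₂)`, `e ↦ (q₁(e), q₂(e))`. -/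
noncomputable def Lmap {E : Type*} [AddCommGroup E] [Module ℝ E]
    (B : LinearMap.BilinForm ℝ E) (K₁ K₂ : Submodule ℝ E) :
    ↥(orthB B K₁ ⊓ orthB B K₂) →ₗ[ℝ] Red B K₁ × Red B K₂ :=
  LinearMap.prod
    (qmap B K₁ ∘ₗ Submodule.inclusion inf_le_left)
    (qmap B K₂ ∘ₗ Submodule.inclusion inf_le_right)

/-- If the fibrewise T-duality relation `R` is invariant under a product of generalised metrics
on the reductions, then `K₁ ∩ K₂^⊥ ⊆ K₂` and `K₂ ∩ K₁^⊥ ⊆ K₁`. -/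
theorem stmt18 (E : Type*) [AddCommGroup E] [Module ℝ E] [FiniteDimensional ℝ E]
    (B : LinearMap.BilinForm ℝ E)
    (hBsymm : ∀ e e', B e e' = B e' e)
    (hBnd : LinearMap.BilinForm.Nondegenerate B)
    (K₁ K₂ : Submodule ℝ E)
    (hK₁ : K₁ ≤ orthB B K₁) (hK₂ : K₂ ≤ orthB B K₂)
    (Bbar₁ : LinearMap.BilinForm ℝ (Red B K₁))
    (hBbar₁ : ∀ e e' : ↥(orthB B K₁),
      Bbar₁ (qmap B K₁ e) (qmap B K₁ e') = B (e : E) (e' : E))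
    (Bbar₂ : LinearMap.BilinForm ℝ (Red B K₂))
    (hBbar₂ : ∀ e e' : ↥(orthB B K₂),
      Bbar₂ (qmap B K₂ e) (qmap B K₂ e') = B (e : E) (e' : E))
    (τ₁ : Red B K₁ →ₗ[ℝ] Red B K₁) (hτ₁inv : τ₁ ∘ₗ τ₁ = LinearMap.id)
    (hG₁symm : ∀ x y, Bbar₁ x (τ₁ y) = Bbar₁ y (τ₁ x))
    (hG₁pos : ∀ x : Red B K₁, x ≠ 0 → 0 < Bbar₁ x (τ₁ x))
    (τ₂ : Red B K₂ →ₗ[ℝ] Red B K₂) (hτ₂inv : τ₂ ∘ₗ τ₂ = LinearMap.id)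
    (hG₂symm : ∀ x y, Bbar₂ x (τ₂ y) = Bbar₂ y (τ₂ x))
    (hG₂pos : ∀ x : Red B K₂, x ≠ 0 → 0 < Bbar₂ x (τ₂ x))
    (hR : Submodule.map (τ₁.prodMap τ₂) (LinearMap.range (Lmap B K₁ K₂))
      = LinearMap.range (Lmap B K₁ K₂)) :
    K₁ ⊓ orthB B K₂ ≤ K₂ ∧ K₂ ⊓ orthB B K₁ ≤ K₁ := by

  constructor
  · rintro e ⟨he1, he2⟩
    have he1' : e ∈ orthB B K₁ := hK₁ he1
    set ee : ↥(orthB B K₁ ⊓ orthB B K₂) := ⟨e, he1', he2⟩ with hee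
    have hx1 : qmap B K₁ (Submodule.inclusion inf_le_left ee) = 0 := by
      rw [qmap, Submodule.mkQ_apply, Submodule.Quotient.mk_eq_zero]
      exact he1
    set x : Red B K₂ := qmap B K₂ (Submodule.inclusion inf_le_right ee) with hxdef
    have hmem : ((0 : Red B K₁), x) ∈ LinearMap.range (Lmap B K₁ K₂) := by
      refine ⟨ee, ?_⟩
      simp only [Lmap, LinearMap.prod_apply, LinearMap.coe_comp, Function.comp_apply,
        Function.prod, hx1]
      rfl
    rw [← hR] at hmem
    obtain ⟨⟨a, b⟩, ⟨e', he'⟩, hab⟩ := hmem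
    have hτb : τ₂ b = x := congrArg Prod.snd hab
    have hb : b = τ₂ x := by
      rw [← hτb]; exact (LinearMap.congr_fun hτ₂inv b).symm
    have hqe'2 : qmap B K₂ (Submodule.inclusion inf_le_right e') = τ₂ x := by
      have := congrArg Prod.snd he'
      simp only [Lmap, LinearMap.prod_apply, LinearMap.coe_comp, Function.comp_apply,
        Function.prod] at this
      rw [this, hb]
    have hzero : Bbar₂ x (τ₂ x) = 0 := by
      rw [← hqe'2, hxdef, hBbar₂]
      exact (Submodule.mem_inf.mp e'.2).1 e he1
    have hx0 : x = 0 := by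
      by_contra h
      exact absurd hzero (ne_of_gt (hG₂pos x h))
    have : Submodule.inclusion (inf_le_right (a := orthB B K₁) (b := orthB B K₂)) ee
        ∈ Ksub B K₂ := by
      rw [← Submodule.Quotient.mk_eq_zero]
      exact hx0
    exact this
  · rintro e ⟨he1, he2⟩
    have he1' : e ∈ orthB B K₂ := hK₂ he1
    set ee : ↥(orthB B K₁ ⊓ orthB B K₂) := ⟨e, he2, he1'⟩ with hee
    have hx2 : qmap B K₂ (Submodule.inclusion inf_le_right ee) = 0 := by
      rw [qmap, Submodule.mkQ_apply, Submodule.Quotient.mk_eq_zero]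
      exact he1
    set x : Red B K₁ := qmap B K₁ (Submodule.inclusion inf_le_left ee) with hxdef
    have hmem : (x, (0 : Red B K₂)) ∈ LinearMap.range (Lmap B K₁ K₂) := by
      refine ⟨ee, ?_⟩
      simp only [Lmap, LinearMap.prod_apply, LinearMap.coe_comp, Function.comp_apply,
        Function.prod, hx2]
      rfl
    rw [← hR] at hmem
    obtain ⟨⟨a, b⟩, ⟨e', he'⟩, hab⟩ := hmem
    have hτa : τ₁ a = x := congrArg Prod.fst hab
    have ha : a = τ₁ x := by
      rw [← hτa]; exact (LinearMap.congr_fun hτ₁inv a).symm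
    have hqe'1 : qmap B K₁ (Submodule.inclusion inf_le_left e') = τ₁ x := by
      have := congrArg Prod.fst he'
      simp only [Lmap, LinearMap.prod_apply, LinearMap.coe_comp, Function.comp_apply,
        Function.prod] at this
      rw [this, ha]
    have hzero : Bbar₁ x (τ₁ x) = 0 := by
      rw [← hqe'1, hxdef, hBbar₁]
      exact (Submodule.mem_inf.mp e'.2).2 e he1
    have hx0 : x = 0 := by
      by_contra h
      exact absurd hzero (ne_of_gt (hG₁pos x h))
    have : Submodule.inclusion (inf_le_left (a := orthB B K₁) (b := orthB B K₂)) ee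
        ∈ Ksub B K₁ := by
      rw [← Submodule.Quotient.mk_eq_zero]
      exact hx0
    exact this
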